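/- Let Δ be a (possibly nonpure) simplicial complex. Then there exists a simplicial complex Γ ⊇ Δ with dim(Γ) = dim(Δ) and d_Δ(σ) = d_Γ(σ) for all faces σ ∈ Δ, such that both Γ and the relative complex (Γ,Δ) admit layer-compatible partitionings of their face posets. -/

import Mathlib

/-- A simplicial complex on vertex set `ℕ`: a finite collection of finite sets of
vertices (faces) closed under taking subsets. -/
def IsComplex (Δ : Finset (Finset ℕ)) : Prop :=
  ∀ σ ∈ Δ, ∀ τ ⊆ σ, τ ∈ Δ

/-- `F` is a facet (maximal face) of `Δ`. -/
def IsFacet (Δ : Finset (Finset ℕ)) (F : Finset ℕ) : Prop :=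
  F ∈ Δ ∧ ∀ G ∈ Δ, F ⊆ G → F = G

/-- `Δ` is a pure `d`-dimensional complex: it is nonempty and every facet has
cardinality `d + 1` (i.e. dimension `d`). -/
def PureDim (Δ : Finset (Finset ℕ)) (d : ℤ) : Prop :=
  Δ.Nonempty ∧ ∀ F : Finset ℕ, IsFacet Δ F → (F.card : ℤ) = d + 1

/-- `S` is a partitioning of the set of faces `P` (ordered by inclusion) into Boolean
intervals topped by maximal elements of `P`.  Each pair `p ∈ S` represents the interval
`[p.1, p.2]`; the intervals must be full Boolean intervals contained in `P`
(second condition), their tops must be maximal elements of `P` (first condition),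
and every element of `P` must lie in exactly one interval (third condition). -/
def IsPartitioning (S : Finset (Finset ℕ × Finset ℕ)) (P : Finset (Finset ℕ)) : Prop :=
  (∀ p ∈ S, p.1 ⊆ p.2 ∧ p.2 ∈ P ∧ ∀ c ∈ P, p.2 ⊆ c → p.2 = c) ∧
  (∀ p ∈ S, ∀ e : Finset ℕ, p.1 ⊆ e → e ⊆ p.2 → e ∈ P) ∧
  (∀ e ∈ P, ∃! p : Finset ℕ × Finset ℕ, p ∈ S ∧ p.1 ⊆ e ∧ e ⊆ p.2)

/-- A set of faces, ordered by inclusion, is partitionable if it admits a partitioning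
into Boolean intervals whose maximum elements are maximal elements. -/
def Partitionable (P : Finset (Finset ℕ)) : Prop :=
  ∃ S : Finset (Finset ℕ × Finset ℕ), IsPartitioning S P

/-- The relative complex `(Δ, ⟨F⟩)`: the faces of `Δ` not contained in `F`. -/
def relF (Δ : Finset (Finset ℕ)) (F : Finset ℕ) : Finset (Finset ℕ) :=
  Δ.filter (fun τ => ¬ τ ⊆ F)

/-- `dcard amb σ` is `d_amb(σ) + 1`: the largest cardinality of a face of `amb`
containing `σ` (so `d_amb(σ)` is the largest dimension of such a face). -/
def dcard (amb : Finset (Finset ℕ)) (σ : Finset ℕ) : ℕ :=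
  (amb.filter (fun τ => σ ⊆ τ)).sup Finset.card

/-- The `f`-triangle: `ftri amb P i j` is the number of faces `σ` of `P` with
`d(σ) = i - 1` (measured in the ambient complex `amb`) and `dim σ = j - 1`,
i.e. `dcard amb σ = i` and `|σ| = j`. -/
def ftri (amb P : Finset (Finset ℕ)) (i j : ℕ) : ℕ :=
  (P.filter (fun σ => dcard amb σ = i ∧ σ.card = j)).card

/-- The `h`-triangle: `h_{i,j} = ∑_{m=0}^{j} (-1)^{j-m} C(i-m, j-m) f_{i,m}`. -/
def htri (amb P : Finset (Finset ℕ)) (i j : ℕ) : ℤ :=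
  ∑ m ∈ Finset.range (j + 1),
    (-1 : ℤ) ^ (j - m) * (Nat.choose (i - m) (j - m) : ℤ) * (ftri amb P i m : ℤ)

/-- `F` is a maximal face (facet) of the set of faces `P`. -/
def MaxFace (P : Finset (Finset ℕ)) (F : Finset ℕ) : Prop :=
  F ∈ P ∧ ∀ G ∈ P, F ⊆ G → F = G

open scoped Classical in
/-- The (relative) complex generated by the facets of `P` of dimension `≥ r`:
the faces of `P` contained in some maximal face of `P` of cardinality `≥ r + 1`. -/
noncomputable def genGE (P : Finset (Finset ℕ)) (r : ℕ) : Finset (Finset ℕ) :=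
  P.filter (fun e => ∃ F, MaxFace P F ∧ r + 1 ≤ F.card ∧ e ⊆ F)

/-- A layer-compatible partitioning of the set of faces `P`: a partitioning such that
for every `r`, the intervals topped by facets of dimension `≥ r` form a partitioning of
the (relative) complex generated by the facets of dimension `≥ r`. -/
def LayerCompatible (S : Finset (Finset ℕ × Finset ℕ)) (P : Finset (Finset ℕ)) : Prop :=
  IsPartitioning S P ∧
    ∀ r : ℕ, IsPartitioning (S.filter (fun p => r + 1 ≤ p.2.card)) (genGE P r)


set_option linter.unusedVariables false
namespace PartExt
open Finset






/-! ### Decoration sets -/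

/-- The decoration set with positions `T` and signs given by `Y`. -/
def dec (N : ℕ) (T Y : Finset ℕ) : Finset ℕ :=
  T.image (fun i => N + 2*i + (if i ∈ Y then 1 else 0))

lemma mem_dec {N : ℕ} {T Y : Finset ℕ} {v : ℕ} :
    v ∈ dec N T Y ↔ ∃ i ∈ T, N + 2*i + (if i ∈ Y then 1 else 0) = v := by
  simp [dec]

lemma dec_ge {N : ℕ} {T Y : Finset ℕ} {v : ℕ} (h : v ∈ dec N T Y) : N ≤ v := by
  obtain ⟨i, _, rfl⟩ := mem_dec.mp h; omega

lemma dec_empty {N : ℕ} {Y : Finset ℕ} : dec N ∅ Y = ∅ := rfl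

lemma enc_inj {N i j : ℕ} {Y Y' : Finset ℕ}
    (h : N + 2*i + (if i ∈ Y then 1 else 0) = N + 2*j + (if j ∈ Y' then 1 else 0)) :
    i = j ∧ ((i ∈ Y) ↔ (j ∈ Y')) := by
  by_cases hi : i ∈ Y <;> by_cases hj : j ∈ Y' <;> simp [hi, hj] at h ⊢ <;> omega

lemma dec_subset_iff {N : ℕ} {T Y T' Y' : Finset ℕ} :
    dec N T Y ⊆ dec N T' Y' ↔ (T ⊆ T' ∧ ∀ i ∈ T, ((i ∈ Y) ↔ (i ∈ Y'))) := by
  constructor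
  · intro h
    have key : ∀ i ∈ T, i ∈ T' ∧ ((i ∈ Y) ↔ (i ∈ Y')) := by
      intro i hi
      have hv : (N + 2*i + (if i ∈ Y then 1 else 0)) ∈ dec N T' Y' :=
        h (mem_dec.mpr ⟨i, hi, rfl⟩)
      obtain ⟨j, hj, hje⟩ := mem_dec.mp hv
      obtain ⟨rfl, hiff⟩ := enc_inj hje
      exact ⟨hj, hiff.symm⟩
    exact ⟨fun i hi => (key i hi).1, fun i hi => (key i hi).2⟩
  · rintro ⟨hT, hY⟩ v hv
    obtain ⟨i, hi, rfl⟩ := mem_dec.mp hv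
    refine mem_dec.mpr ⟨i, hT hi, ?_⟩
    by_cases h : i ∈ Y
    · simp [h, (hY i hi).mp h]
    · simp [h, fun h' => h ((hY i hi).mpr h')]
      exact fun h' => h ((hY i hi).mpr h')

lemma dec_congr {N : ℕ} {T Y Y' : Finset ℕ} (h : ∀ i ∈ T, (i ∈ Y ↔ i ∈ Y')) :
    dec N T Y = dec N T Y' :=
  subset_antisymm ((dec_subset_iff).mpr ⟨subset_rfl, h⟩)
    ((dec_subset_iff).mpr ⟨subset_rfl, fun i hi => (h i hi).symm⟩)

lemma card_dec {N : ℕ} {T Y : Finset ℕ} : (dec N T Y).card = T.card :=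
  card_image_of_injOn (fun i _ j _ h => (enc_inj h).1)

lemma subset_dec {N : ℕ} {e T Y : Finset ℕ} (h : e ⊆ dec N T Y) :
    ∃ T', T' ⊆ T ∧ e = dec N T' Y := by
  refine ⟨T.filter (fun i => N + 2*i + (if i ∈ Y then 1 else 0) ∈ e), filter_subset _ _, ?_⟩
  ext v
  constructor
  · intro hv
    obtain ⟨i, hi, hie⟩ := mem_dec.mp (h hv)
    exact mem_dec.mpr ⟨i, mem_filter.mpr ⟨hi, hie ▸ hv⟩, hie⟩
  · intro hv
    obtain ⟨i, hi, hie⟩ := mem_dec.mp hv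
    exact hie ▸ (mem_filter.mp hi).2

lemma dec_nonempty_iff {N : ℕ} {T Y : Finset ℕ} : (dec N T Y).Nonempty ↔ T.Nonempty := by
  constructor
  · rintro ⟨v, hv⟩; obtain ⟨i, hi, _⟩ := mem_dec.mp hv; exact ⟨i, hi⟩
  · rintro ⟨i, hi⟩; exact ⟨_, mem_dec.mpr ⟨i, hi, rfl⟩⟩







/-- The bottom-support of the sign vector `Y` (inside `range K`): position `0` belongs to it
iff the sign sequence has equal values at the ends, and position `j+1` belongs to it iff the
sequence changes between `j` and `j+1`. -/
def SsetF (K : ℕ) (Y : Finset ℕ) : Finset ℕ :=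
  (range K).filter (fun j => if j = 0 then ((0 ∈ Y) ↔ (K - 1 ∈ Y)) else ¬((j - 1 ∈ Y) ↔ (j ∈ Y)))

lemma mem_SsetF {K : ℕ} {Y : Finset ℕ} {j : ℕ} :
    j ∈ SsetF K Y ↔ j < K ∧
      (if j = 0 then ((0 ∈ Y) ↔ (K - 1 ∈ Y)) else ¬((j - 1 ∈ Y) ↔ (j ∈ Y))) := by
  simp [SsetF]

lemma SsetF_subset_range {K : ℕ} {Y : Finset ℕ} : SsetF K Y ⊆ range K :=
  filter_subset _ _

lemma SsetF_nonempty {K : ℕ} (hK : K ≠ 0) (Y : Finset ℕ) : (SsetF K Y).Nonempty := by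
  by_contra h
  rw [not_nonempty_iff_eq_empty] at h
  have hall : ∀ j, j ∉ SsetF K Y := by simp [h]
  have h0 : ¬ ((0 ∈ Y) ↔ (K - 1 ∈ Y)) := by
    have := hall 0
    rw [mem_SsetF] at this
    simpa [Nat.pos_of_ne_zero hK] using this
  have chain : ∀ j, j < K → ((0 ∈ Y) ↔ (j ∈ Y)) := by
    intro j
    induction j with
    | zero => intro _; exact Iff.rfl
    | succ n ih =>
      intro hj
      have hn := ih (by omega)
      have := hall (n + 1)
      rw [mem_SsetF] at this
      simp only [hj, true_and, Nat.add_sub_cancel] at this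
      have : (n ∈ Y) ↔ ((n+1) ∈ Y) := by
        by_contra hc
        exact this (by simp; tauto)
      exact hn.trans this
  exact h0 (chain (K - 1) (by omega))

/-- The completion sequence: at positions in `T` it follows `Y`, elsewhere it copies the
previous value; before the first element of `T` it has the default value `v0`. -/
def epsSeq (T Y : Finset ℕ) (v0 : Bool) : ℕ → Bool
  | 0 => if 0 ∈ T then decide (0 ∈ Y) else v0
  | (j+1) => if (j+1) ∈ T then decide ((j+1) ∈ Y) else epsSeq T Y v0 j

lemma epsSeq_mem {T Y : Finset ℕ} {v0 : Bool} {j : ℕ} (hj : j ∈ T) :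
    (epsSeq T Y v0 j = true) ↔ j ∈ Y := by
  cases j <;> simp [epsSeq, hj]

lemma epsSeq_not_mem_succ {T Y : Finset ℕ} {v0 : Bool} {j : ℕ} (hj : (j+1) ∉ T) :
    epsSeq T Y v0 (j+1) = epsSeq T Y v0 j := by
  simp [epsSeq, hj]

lemma epsSeq_zero_not_mem {T Y : Finset ℕ} {v0 : Bool} (h : 0 ∉ T) :
    epsSeq T Y v0 0 = v0 := by simp [epsSeq, h]

/-- Above the maximum of `T` the sequence is constantly `Y`-membership of the max. -/
lemma epsSeq_ge_max {T Y : Finset ℕ} {v0 : Bool} {M : ℕ} (hM : M ∈ T)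
    (hmax : ∀ t ∈ T, t ≤ M) : ∀ j, M ≤ j → ((epsSeq T Y v0 j = true) ↔ M ∈ Y) := by
  intro j
  induction j with
  | zero => intro h0; have : M = 0 := by omega
            subst this; exact epsSeq_mem hM
  | succ n ih =>
    intro hMn
    rcases Nat.lt_or_ge n M with h | h
    · have : M = n + 1 := by omega
      subst this; exact epsSeq_mem hM
    · have hnot : (n+1) ∉ T := fun hc => by have := hmax _ hc; omega
      rw [epsSeq_not_mem_succ hnot]
      exact ih h






variable {K : ℕ} {T Y : Finset ℕ}

lemma signext (hT : T ⊆ range K) (hne : T.Nonempty) (hY : Y ⊆ T) :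
    ∃! Z : Finset ℕ, Z ⊆ range K ∧ Z ∩ T = Y ∧ SsetF K Z ⊆ T := by
  classical
  set M := T.max' hne with hM
  have hMT : M ∈ T := T.max'_mem hne
  have hmax : ∀ t ∈ T, t ≤ M := fun t ht => T.le_max' t ht
  have hMK : M < K := mem_range.mp (hT hMT)
  set v0 : Bool := !(decide (M ∈ Y)) with hv0
  have hv0iff : (v0 = true) ↔ ¬ (M ∈ Y) := by simp [hv0]
  set Z : Finset ℕ := (range K).filter (fun j => epsSeq T Y v0 j = true) with hZ
  have mem_Z : ∀ j, j ∈ Z ↔ (j < K ∧ epsSeq T Y v0 j = true) := by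
    intro j; simp [hZ]
  have hK1 : ((K - 1) ∈ Z) ↔ (M ∈ Y) := by
    rw [mem_Z]
    have := epsSeq_ge_max (Y := Y) (v0 := v0) hMT hmax (K - 1) (by omega)
    constructor
    · intro h; exact this.mp h.2
    · intro h; exact ⟨by omega, this.mpr h⟩
  refine ⟨Z, ⟨filter_subset _ _, ?_, ?_⟩, ?_⟩
  · -- Z ∩ T = Y
    ext i
    simp only [mem_inter, mem_Z]
    constructor
    · rintro ⟨⟨_, heps⟩, hiT⟩
      exact (epsSeq_mem hiT).mp heps
    · intro hiY
      have hiT := hY hiY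
      exact ⟨⟨mem_range.mp (hT hiT), (epsSeq_mem hiT).mpr hiY⟩, hiT⟩
  · -- SsetF K Z ⊆ T
    intro j hj
    rw [mem_SsetF] at hj
    obtain ⟨hjK, hcond⟩ := hj
    rcases Nat.eq_zero_or_pos j with rfl | hpos
    · rw [if_pos rfl] at hcond
      by_contra h0T
      have he0 : epsSeq T Y v0 0 = v0 := epsSeq_zero_not_mem h0T
      have h0Z : (0 ∈ Z) ↔ ¬ (M ∈ Y) := by
        rw [mem_Z, he0]
        constructor
        · intro h; exact hv0iff.mp h.2
        · intro h; exact ⟨by omega, hv0iff.mpr h⟩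
      rw [h0Z, hK1] at hcond
      tauto
    · obtain ⟨n, rfl⟩ : ∃ n, j = n + 1 := ⟨j - 1, by omega⟩
      simp only [Nat.succ_ne_zero, if_neg, Nat.add_sub_cancel] at hcond
      by_contra hnT
      have he : epsSeq T Y v0 (n+1) = epsSeq T Y v0 n := epsSeq_not_mem_succ hnT
      have : ((n ∈ Z) ↔ ((n+1) ∈ Z)) := by
        rw [mem_Z, mem_Z, he]
        constructor
        · intro h; exact ⟨by omega, h.2⟩
        · intro h; exact ⟨by omega, h.2⟩
      exact hcond this
  · -- uniqueness
    rintro Z' ⟨hZ'K, hZ'T, hZ'S⟩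
    have memT : ∀ j ∈ T, ((j ∈ Z') ↔ j ∈ Y) := by
      intro j hjT
      constructor
      · intro h; rw [← hZ'T]; exact mem_inter.mpr ⟨h, hjT⟩
      · intro h; exact (mem_inter.mp (hZ'T ▸ h)).1
    have U1 : ∀ j, j < K → (∃ t ∈ T, t ≤ j) → ((j ∈ Z') ↔ epsSeq T Y v0 j = true) := by
      intro j
      induction j with
      | zero =>
        intro _ hex
        obtain ⟨t, htT, ht0⟩ := hex
        have h0T : 0 ∈ T := by have : t = 0 := by omega
                               exact this ▸ htT
        rw [memT 0 h0T, epsSeq_mem h0T]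
      | succ n ih =>
        intro hjK hex
        by_cases hT1 : (n+1) ∈ T
        · rw [memT _ hT1, epsSeq_mem hT1]
        · obtain ⟨t, htT, htle⟩ := hex
          have htn : t ≤ n := by rcases Nat.lt_or_ge t (n+1) with h | h
                                 · omega
                                 · exact absurd htT (by have : t = n+1 := by omega
                                                        exact this ▸ hT1)
          have ihn := ih (by omega) ⟨t, htT, htn⟩
          have hnS : (n+1) ∉ SsetF K Z' := fun hc => hT1 (hZ'S hc)
          rw [mem_SsetF] at hnS
          simp only [Nat.succ_ne_zero, if_neg, Nat.add_sub_cancel] at hnS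
          have hiff : (n ∈ Z') ↔ ((n+1) ∈ Z') := by
            by_contra hc
            exact hnS ⟨hjK, hc⟩
          rw [← hiff, ihn, epsSeq_not_mem_succ hT1]
    have hK1' : ((K-1) ∈ Z') ↔ (M ∈ Y) := by
      rw [U1 (K-1) (by omega) ⟨M, hMT, by omega⟩]
      exact (epsSeq_ge_max hMT hmax (K-1) (by omega))
    have U2 : ∀ j, j < K → (∀ t ∈ T, ¬ t ≤ j) → ((j ∈ Z') ↔ epsSeq T Y v0 j = true) := by
      intro j
      induction j with
      | zero =>
        intro hjK hno
        have h0T : 0 ∉ T := fun hc => hno 0 hc (le_refl 0)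
        have h0S : 0 ∉ SsetF K Z' := fun hc => h0T (hZ'S hc)
        rw [mem_SsetF] at h0S
        simp only [if_pos rfl] at h0S
        have hne0 : ¬ ((0 ∈ Z') ↔ ((K-1) ∈ Z')) := fun hc => h0S ⟨hjK, hc⟩
        rw [epsSeq_zero_not_mem h0T, hv0iff]
        rw [hK1'] at hne0
        tauto
      | succ n ih =>
        intro hjK hno
        have hT1 : (n+1) ∉ T := fun hc => hno _ hc (le_refl _)
        have ihn := ih (by omega) (fun t ht hle => hno t ht (by omega))
        have hnS : (n+1) ∉ SsetF K Z' := fun hc => hT1 (hZ'S hc)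
        rw [mem_SsetF] at hnS
        simp only [Nat.succ_ne_zero, if_neg, Nat.add_sub_cancel] at hnS
        have hiff : (n ∈ Z') ↔ ((n+1) ∈ Z') := by
          by_contra hc
          exact hnS ⟨hjK, hc⟩
        rw [← hiff, ihn, epsSeq_not_mem_succ hT1]
    ext j
    by_cases hjK : j < K
    · rw [mem_Z]
      by_cases hex : ∃ t ∈ T, t ≤ j
      · rw [U1 j hjK hex]; tauto
      · push_neg at hex
        rw [U2 j hjK (fun t ht hle => absurd hle (Nat.not_le.mpr (hex t ht)))]
        tauto
    · constructor
      · intro h; exact absurd (mem_range.mp (hZ'K h)) hjK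
      · intro h; exact absurd (mem_range.mp ((filter_subset _ _) h)) hjK






variable (N : ℕ) (Kf : Finset ℕ → ℕ)

/-- The top face of the Boolean interval attached to `σ` with sign vector `Y`. -/
def topOf (σ Y : Finset ℕ) : Finset ℕ := σ ∪ dec N (range (Kf σ)) Y

/-- The decorated family over the base family `B`. -/
def Pfull (B : Finset (Finset ℕ)) : Finset (Finset ℕ) :=
  B.biUnion (fun σ => ((range (Kf σ)).powerset).biUnion
    (fun T => T.powerset.image (fun Y => σ ∪ dec N T Y)))

/-- The positively decorated part (decoration nonempty). -/
def Ppos (B : Finset (Finset ℕ)) : Finset (Finset ℕ) :=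
  B.biUnion (fun σ => (((range (Kf σ)).powerset).filter (fun T => T.Nonempty)).biUnion
    (fun T => T.powerset.image (fun Y => σ ∪ dec N T Y)))

/-- The partitioning of `Pfull`. -/
def Spart (B : Finset (Finset ℕ)) : Finset (Finset ℕ × Finset ℕ) :=
  B.biUnion (fun σ => ((range (Kf σ)).powerset).image
    (fun Y => (σ ∪ dec N Y Y, topOf N Kf σ Y)))

/-- The partitioning of `Ppos`. -/
def Tpart (B : Finset (Finset ℕ)) : Finset (Finset ℕ × Finset ℕ) :=
  (B.filter (fun σ => Kf σ ≠ 0)).biUnion (fun σ => ((range (Kf σ)).powerset).image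
    (fun Y => (σ ∪ dec N (SsetF (Kf σ) Y) Y, topOf N Kf σ Y)))

variable {N Kf}

lemma mem_Pfull {B : Finset (Finset ℕ)} {e : Finset ℕ} :
    e ∈ Pfull N Kf B ↔ ∃ σ ∈ B, ∃ T, T ⊆ range (Kf σ) ∧ ∃ Y, Y ⊆ T ∧ e = σ ∪ dec N T Y := by
  simp [Pfull, eq_comm]

lemma mem_Ppos {B : Finset (Finset ℕ)} {e : Finset ℕ} :
    e ∈ Ppos N Kf B ↔
      ∃ σ ∈ B, ∃ T, (T ⊆ range (Kf σ) ∧ T.Nonempty) ∧ ∃ Y, Y ⊆ T ∧ e = σ ∪ dec N T Y := by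
  simp [Ppos, eq_comm]

lemma mem_Spart {B : Finset (Finset ℕ)} {p : Finset ℕ × Finset ℕ} :
    p ∈ Spart N Kf B ↔
      ∃ σ ∈ B, ∃ Y, Y ⊆ range (Kf σ) ∧ p = (σ ∪ dec N Y Y, topOf N Kf σ Y) := by
  simp [Spart, eq_comm]

lemma mem_Tpart {B : Finset (Finset ℕ)} {p : Finset ℕ × Finset ℕ} :
    p ∈ Tpart N Kf B ↔
      ∃ σ ∈ B, Kf σ ≠ 0 ∧ ∃ Y, Y ⊆ range (Kf σ) ∧
        p = (σ ∪ dec N (SsetF (Kf σ) Y) Y, topOf N Kf σ Y) := by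
  simp only [Tpart, mem_biUnion, mem_filter, mem_image, mem_powerset]
  constructor
  · rintro ⟨σ, ⟨hσ, hK⟩, Y, hY, rfl⟩; exact ⟨σ, hσ, hK, Y, hY, rfl⟩
  · rintro ⟨σ, hσ, hK, Y, hY, rfl⟩; exact ⟨σ, ⟨hσ, hK⟩, Y, hY, rfl⟩

lemma ppos_subset_pfull {B : Finset (Finset ℕ)} : Ppos N Kf B ⊆ Pfull N Kf B := by
  intro e he
  obtain ⟨σ, hσ, T, ⟨hT, _⟩, Y, hY, rfl⟩ := mem_Ppos.mp he
  exact mem_Pfull.mpr ⟨σ, hσ, T, hT, Y, hY, rfl⟩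

lemma low_union_subset {σ σ' T Y T' Y' : Finset ℕ}
    (hσ : ∀ v ∈ σ, v < N) (hσ' : ∀ v ∈ σ', v < N) :
    σ ∪ dec N T Y ⊆ σ' ∪ dec N T' Y' ↔ (σ ⊆ σ' ∧ dec N T Y ⊆ dec N T' Y') := by
  constructor
  · intro h
    constructor
    · intro v hv
      rcases mem_union.mp (h (mem_union_left _ hv)) with h' | h'
      · exact h'
      · exact absurd (dec_ge h') (by have := hσ v hv; omega)
    · intro v hv
      rcases mem_union.mp (h (mem_union_right _ hv)) with h' | h'
      · exact absurd (dec_ge hv) (by have := hσ' v h'; omega)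
      · exact h'
  · rintro ⟨h1, h2⟩
    exact union_subset_union h1 h2

lemma card_union_dec {σ T Y : Finset ℕ} (hσ : ∀ v ∈ σ, v < N) :
    (σ ∪ dec N T Y).card = σ.card + T.card := by
  rw [card_union_of_disjoint, card_dec]
  rw [disjoint_left]
  intro v hv hv'
  exact absurd (dec_ge hv') (by have := hσ v hv; omega)

lemma card_topOf {σ Y : Finset ℕ} (hσ : ∀ v ∈ σ, v < N) :
    (topOf N Kf σ Y).card = σ.card + Kf σ := by
  rw [topOf, card_union_dec hσ, card_range]

lemma between_decomp {σ T Y e : Finset ℕ} (hσ : ∀ v ∈ σ, v < N)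
    (h1 : σ ⊆ e) (h2 : e ⊆ σ ∪ dec N T Y) :
    ∃ T', T' ⊆ T ∧ e = σ ∪ dec N T' Y := by
  have hhigh : e.filter (fun v => N ≤ v) ⊆ dec N T Y := by
    intro v hv
    obtain ⟨hve, hvN⟩ := mem_filter.mp hv
    rcases mem_union.mp (h2 hve) with h' | h'
    · exact absurd hvN (by have := hσ v h'; omega)
    · exact h'
  obtain ⟨T', hT', hE⟩ := subset_dec hhigh
  refine ⟨T', hT', ?_⟩
  ext v
  constructor
  · intro hv
    by_cases hvN : v < N
    · rcases mem_union.mp (h2 hv) with h' | h'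
      · exact mem_union_left _ h'
      · exact absurd (dec_ge h') (by omega)
    · exact mem_union_right _ (hE ▸ mem_filter.mpr ⟨hv, by omega⟩)
  · intro hv
    rcases mem_union.mp hv with h' | h'
    · exact h1 h'
    · exact (mem_filter.mp (hE ▸ h' : v ∈ e.filter (fun v => N ≤ v))).1

lemma top_mem_Pfull {B : Finset (Finset ℕ)} {σ Y : Finset ℕ} (hσ : σ ∈ B)
    (hY : Y ⊆ range (Kf σ)) : topOf N Kf σ Y ∈ Pfull N Kf B :=
  mem_Pfull.mpr ⟨σ, hσ, range (Kf σ), subset_rfl, Y, hY, rfl⟩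

lemma top_mem_Ppos {B : Finset (Finset ℕ)} {σ Y : Finset ℕ} (hσ : σ ∈ B) (hK : Kf σ ≠ 0)
    (hY : Y ⊆ range (Kf σ)) : topOf N Kf σ Y ∈ Ppos N Kf B :=
  mem_Ppos.mpr ⟨σ, hσ, range (Kf σ), ⟨subset_rfl, nonempty_range_iff.mpr hK⟩, Y, hY, rfl⟩

lemma top_max {B : Finset (Finset ℕ)} (hlow : ∀ σ ∈ B, ∀ v ∈ σ, v < N)
    (hmx : ∀ σ ∈ B, ∀ τ ∈ B, σ ⊆ τ → τ.card + Kf τ ≤ σ.card + Kf σ)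
    {σ Y : Finset ℕ} (hσ : σ ∈ B) (hY : Y ⊆ range (Kf σ)) :
    ∀ e ∈ Pfull N Kf B, topOf N Kf σ Y ⊆ e → topOf N Kf σ Y = e := by
  intro e he hsub
  obtain ⟨σ', hσ', T', hT', Y', hY', rfl⟩ := mem_Pfull.mp he
  have hsplit := (low_union_subset (hlow σ hσ) (hlow σ' hσ')).mp hsub
  have hcard : (σ' ∪ dec N T' Y').card ≤ (topOf N Kf σ Y).card := by
    rw [card_union_dec (hlow σ' hσ'), card_topOf (hlow σ hσ)]
    have h1 : T'.card ≤ Kf σ' := by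
      have := card_le_card hT'
      rwa [card_range] at this
    have h2 := hmx σ hσ σ' hσ' hsplit.1
    omega
  exact eq_of_subset_of_card_le hsub hcard






variable {N : ℕ} {Kf : Finset ℕ → ℕ} {B : Finset (Finset ℕ)}

theorem isPartitioning_Spart (hlow : ∀ σ ∈ B, ∀ v ∈ σ, v < N)
    (hmx : ∀ σ ∈ B, ∀ τ ∈ B, σ ⊆ τ → τ.card + Kf τ ≤ σ.card + Kf σ) :
    IsPartitioning (Spart N Kf B) (Pfull N Kf B) := by
  refine ⟨?_, ?_, ?_⟩
  · rintro p hp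
    obtain ⟨σ, hσ, Y, hY, rfl⟩ := mem_Spart.mp hp
    exact ⟨union_subset_union subset_rfl (dec_subset_iff.mpr ⟨hY, fun i hi => Iff.rfl⟩),
      top_mem_Pfull hσ hY, fun c hc hsub => top_max hlow hmx hσ hY c hc hsub⟩
  · rintro p hp e h1 h2
    obtain ⟨σ, hσ, Y, hY, rfl⟩ := mem_Spart.mp hp
    have hσe : σ ⊆ e := subset_trans subset_union_left h1
    have h2' : e ⊆ σ ∪ dec N (range (Kf σ)) Y := h2
    obtain ⟨T', hT', rfl⟩ := between_decomp (hlow σ hσ) hσe h2'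
    refine mem_Pfull.mpr ⟨σ, hσ, T', hT', Y ∩ T', inter_subset_right, ?_⟩
    exact congrArg (σ ∪ ·) (dec_congr (fun i hi => by simp [hi]))
  · intro e he
    obtain ⟨σ, hσ, T, hT, Y, hY, rfl⟩ := mem_Pfull.mp he
    refine ⟨(σ ∪ dec N Y Y, topOf N Kf σ Y),
      ⟨mem_Spart.mpr ⟨σ, hσ, Y, hY.trans hT, rfl⟩,
       union_subset_union subset_rfl (dec_subset_iff.mpr ⟨hY, fun i hi => Iff.rfl⟩),
       union_subset_union subset_rfl (dec_subset_iff.mpr ⟨hT, fun i hi => Iff.rfl⟩)⟩, ?_⟩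
    rintro q ⟨hq, hq1, hq2⟩
    obtain ⟨σ', hσ', Y', hY', rfl⟩ := mem_Spart.mp hq
    have hs1 := (low_union_subset (hlow σ' hσ') (hlow σ hσ)).mp hq1
    have hs2 := (low_union_subset (hlow σ hσ) (hlow σ' hσ')).mp hq2
    obtain rfl : σ' = σ := subset_antisymm hs1.1 hs2.1
    have h3 := dec_subset_iff.mp hs1.2
    have h4 := dec_subset_iff.mp hs2.2
    have hYY : Y' = Y :=
      subset_antisymm (fun i hi => (h3.2 i hi).mp hi) (fun i hi => (h4.2 i (hY hi)).mp hi)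
    rw [hYY]

theorem isPartitioning_Tpart (hlow : ∀ σ ∈ B, ∀ v ∈ σ, v < N)
    (hmx : ∀ σ ∈ B, ∀ τ ∈ B, σ ⊆ τ → τ.card + Kf τ ≤ σ.card + Kf σ) :
    IsPartitioning (Tpart N Kf B) (Ppos N Kf B) := by
  refine ⟨?_, ?_, ?_⟩
  · rintro p hp
    obtain ⟨σ, hσ, hK, Y, hY, rfl⟩ := mem_Tpart.mp hp
    refine ⟨union_subset_union subset_rfl
        (dec_subset_iff.mpr ⟨SsetF_subset_range, fun i hi => Iff.rfl⟩),
      top_mem_Ppos hσ hK hY, fun c hc hsub => ?_⟩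
    exact top_max hlow hmx hσ hY c (ppos_subset_pfull hc) hsub
  · rintro p hp e h1 h2
    obtain ⟨σ, hσ, hK, Y, hY, rfl⟩ := mem_Tpart.mp hp
    have hσe : σ ⊆ e := subset_trans subset_union_left h1
    have h2' : e ⊆ σ ∪ dec N (range (Kf σ)) Y := h2
    obtain ⟨T', hT', rfl⟩ := between_decomp (hlow σ hσ) hσe h2'
    have hT'ne : T'.Nonempty := by
      obtain ⟨s0, hs0⟩ := SsetF_nonempty hK Y
      have hv : (N + 2*s0 + (if s0 ∈ Y then 1 else 0)) ∈ σ ∪ dec N T' Y :=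
        h1 (mem_union_right _ (mem_dec.mpr ⟨s0, hs0, rfl⟩))
      rcases mem_union.mp hv with h' | h'
      · exact absurd (hlow σ hσ _ h') (by omega)
      · exact dec_nonempty_iff.mp ⟨_, h'⟩
    refine mem_Ppos.mpr ⟨σ, hσ, T', ⟨hT', hT'ne⟩, Y ∩ T', inter_subset_right, ?_⟩
    exact congrArg (σ ∪ ·) (dec_congr (fun i hi => by simp [hi]))
  · intro e he
    obtain ⟨σ, hσ, T, ⟨hT, hTne⟩, Y, hY, rfl⟩ := mem_Ppos.mp he
    have hK : Kf σ ≠ 0 := by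
      obtain ⟨t, ht⟩ := hTne
      have := mem_range.mp (hT ht); omega
    obtain ⟨Z, ⟨hZK, hZT, hZS⟩, huniq⟩ := signext hT hTne hY
    have hagree : ∀ i ∈ T, ((i ∈ Y) ↔ (i ∈ Z)) := by
      intro i hi
      rw [← hZT]
      simp [mem_inter, hi]
    refine ⟨(σ ∪ dec N (SsetF (Kf σ) Z) Z, topOf N Kf σ Z),
      ⟨mem_Tpart.mpr ⟨σ, hσ, hK, Z, hZK, rfl⟩,
       union_subset_union subset_rfl
         (dec_subset_iff.mpr ⟨hZS, fun i hi => (hagree i (hZS hi)).symm⟩),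
       union_subset_union subset_rfl (dec_subset_iff.mpr ⟨hT.trans ?_, hagree⟩)⟩, ?_⟩
    · exact subset_rfl
    · rintro q ⟨hq, hq1, hq2⟩
      obtain ⟨σ', hσ', hK', Y', hY', rfl⟩ := mem_Tpart.mp hq
      have hs1 := (low_union_subset (hlow σ' hσ') (hlow σ hσ)).mp hq1
      have hs2 := (low_union_subset (hlow σ hσ) (hlow σ' hσ')).mp hq2
      obtain rfl : σ' = σ := subset_antisymm hs1.1 hs2.1
      have h3 := dec_subset_iff.mp hs1.2
      have h4 := dec_subset_iff.mp hs2.2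
      have hY'Z : Y' = Z := by
        refine huniq Y' ⟨hY', ?_, h3.1⟩
        ext i
        simp only [mem_inter]
        constructor
        · rintro ⟨hiY', hiT⟩
          exact (h4.2 i hiT).mpr hiY'
        · intro hiY
          exact ⟨(h4.2 i (hY hiY)).mp hiY, hY hiY⟩
      rw [hY'Z]






variable {N : ℕ} {Kf : Finset ℕ → ℕ} {B : Finset (Finset ℕ)}

lemma maxface_pfull_iff (hlow : ∀ σ ∈ B, ∀ v ∈ σ, v < N)
    (hmx : ∀ σ ∈ B, ∀ τ ∈ B, σ ⊆ τ → τ.card + Kf τ ≤ σ.card + Kf σ) {F : Finset ℕ} :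
    MaxFace (Pfull N Kf B) F ↔ ∃ σ ∈ B, ∃ Y, Y ⊆ range (Kf σ) ∧ F = topOf N Kf σ Y := by
  constructor
  · rintro ⟨hF, hmax⟩
    obtain ⟨σ, hσ, T, hT, Y, hY, rfl⟩ := mem_Pfull.mp hF
    have hsub : σ ∪ dec N T Y ⊆ topOf N Kf σ Y :=
      union_subset_union subset_rfl (dec_subset_iff.mpr ⟨hT, fun i hi => Iff.rfl⟩)
    exact ⟨σ, hσ, Y, hY.trans hT, hmax _ (top_mem_Pfull hσ (hY.trans hT)) hsub⟩
  · rintro ⟨σ, hσ, Y, hY, rfl⟩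
    exact ⟨top_mem_Pfull hσ hY, fun G hG hsub => top_max hlow hmx hσ hY G hG hsub⟩

lemma maxface_ppos_iff (hlow : ∀ σ ∈ B, ∀ v ∈ σ, v < N)
    (hmx : ∀ σ ∈ B, ∀ τ ∈ B, σ ⊆ τ → τ.card + Kf τ ≤ σ.card + Kf σ) {F : Finset ℕ} :
    MaxFace (Ppos N Kf B) F ↔
      ∃ σ ∈ B, Kf σ ≠ 0 ∧ ∃ Y, Y ⊆ range (Kf σ) ∧ F = topOf N Kf σ Y := by
  constructor
  · rintro ⟨hF, hmax⟩
    obtain ⟨σ, hσ, T, ⟨hT, hTne⟩, Y, hY, rfl⟩ := mem_Ppos.mp hF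
    have hK : Kf σ ≠ 0 := by
      obtain ⟨t, ht⟩ := hTne
      have := mem_range.mp (hT ht); omega
    have hsub : σ ∪ dec N T Y ⊆ topOf N Kf σ Y :=
      union_subset_union subset_rfl (dec_subset_iff.mpr ⟨hT, fun i hi => Iff.rfl⟩)
    exact ⟨σ, hσ, hK, Y, hY.trans hT, hmax _ (top_mem_Ppos hσ hK (hY.trans hT)) hsub⟩
  · rintro ⟨σ, hσ, hK, Y, hY, rfl⟩
    exact ⟨top_mem_Ppos hσ hK hY,
      fun G hG hsub => top_max hlow hmx hσ hY G (ppos_subset_pfull hG) hsub⟩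

lemma genGE_pfull (hlow : ∀ σ ∈ B, ∀ v ∈ σ, v < N)
    (hmx : ∀ σ ∈ B, ∀ τ ∈ B, σ ⊆ τ → τ.card + Kf τ ≤ σ.card + Kf σ) (r : ℕ) :
    genGE (Pfull N Kf B) r = Pfull N Kf (B.filter (fun σ => r + 1 ≤ σ.card + Kf σ)) := by
  ext e
  simp only [genGE, mem_filter]
  constructor
  · rintro ⟨he, F, hmF, hrF, heF⟩
    obtain ⟨σ, hσ, T, hT, Y, hY, rfl⟩ := mem_Pfull.mp he
    obtain ⟨σ', hσ', Y', hY', rfl⟩ := (maxface_pfull_iff hlow hmx).mp hmF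
    have heF' : σ ∪ dec N T Y ⊆ σ' ∪ dec N (range (Kf σ')) Y' := heF
    have hsplit := (low_union_subset (hlow σ hσ) (hlow σ' hσ')).mp heF'
    have hcard : (topOf N Kf σ' Y').card = σ'.card + Kf σ' := card_topOf (hlow σ' hσ')
    refine mem_Pfull.mpr ⟨σ, mem_filter.mpr ⟨hσ, ?_⟩, T, hT, Y, hY, rfl⟩
    have := hmx σ hσ σ' hσ' hsplit.1
    omega
  · rintro he
    obtain ⟨σ, hσf, T, hT, Y, hY, rfl⟩ := mem_Pfull.mp he
    obtain ⟨hσ, hr⟩ := mem_filter.mp hσf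
    refine ⟨mem_Pfull.mpr ⟨σ, hσ, T, hT, Y, hY, rfl⟩, topOf N Kf σ Y,
      (maxface_pfull_iff hlow hmx).mpr ⟨σ, hσ, Y, hY.trans hT, rfl⟩, ?_,
      union_subset_union subset_rfl (dec_subset_iff.mpr ⟨hT, fun i hi => Iff.rfl⟩)⟩
    rw [card_topOf (hlow σ hσ)]; exact hr

lemma genGE_ppos (hlow : ∀ σ ∈ B, ∀ v ∈ σ, v < N)
    (hmx : ∀ σ ∈ B, ∀ τ ∈ B, σ ⊆ τ → τ.card + Kf τ ≤ σ.card + Kf σ) (r : ℕ) :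
    genGE (Ppos N Kf B) r = Ppos N Kf (B.filter (fun σ => r + 1 ≤ σ.card + Kf σ)) := by
  ext e
  simp only [genGE, mem_filter]
  constructor
  · rintro ⟨he, F, hmF, hrF, heF⟩
    obtain ⟨σ, hσ, T, hTT, Y, hY, rfl⟩ := mem_Ppos.mp he
    obtain ⟨σ', hσ', hK', Y', hY', rfl⟩ := (maxface_ppos_iff hlow hmx).mp hmF
    have heF' : σ ∪ dec N T Y ⊆ σ' ∪ dec N (range (Kf σ')) Y' := heF
    have hsplit := (low_union_subset (hlow σ hσ) (hlow σ' hσ')).mp heF'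
    have hcard : (topOf N Kf σ' Y').card = σ'.card + Kf σ' := card_topOf (hlow σ' hσ')
    refine mem_Ppos.mpr ⟨σ, mem_filter.mpr ⟨hσ, ?_⟩, T, hTT, Y, hY, rfl⟩
    have := hmx σ hσ σ' hσ' hsplit.1
    omega
  · rintro he
    obtain ⟨σ, hσf, T, ⟨hT, hTne⟩, Y, hY, rfl⟩ := mem_Ppos.mp he
    obtain ⟨hσ, hr⟩ := mem_filter.mp hσf
    have hK : Kf σ ≠ 0 := by
      obtain ⟨t, ht⟩ := hTne
      have := mem_range.mp (hT ht); omega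
    refine ⟨mem_Ppos.mpr ⟨σ, hσ, T, ⟨hT, hTne⟩, Y, hY, rfl⟩, topOf N Kf σ Y,
      (maxface_ppos_iff hlow hmx).mpr ⟨σ, hσ, hK, Y, hY.trans hT, rfl⟩, ?_,
      union_subset_union subset_rfl (dec_subset_iff.mpr ⟨hT, fun i hi => Iff.rfl⟩)⟩
    rw [card_topOf (hlow σ hσ)]; exact hr

lemma Spart_filter (hlow : ∀ σ ∈ B, ∀ v ∈ σ, v < N) (r : ℕ) :
    (Spart N Kf B).filter (fun p => r + 1 ≤ p.2.card) =
      Spart N Kf (B.filter (fun σ => r + 1 ≤ σ.card + Kf σ)) := by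
  ext p
  simp only [mem_filter]
  constructor
  · rintro ⟨hp, hcard⟩
    obtain ⟨σ, hσ, Y, hY, rfl⟩ := mem_Spart.mp hp
    refine mem_Spart.mpr ⟨σ, mem_filter.mpr ⟨hσ, ?_⟩, Y, hY, rfl⟩
    have hcard' : r + 1 ≤ (topOf N Kf σ Y).card := hcard
    rwa [card_topOf (hlow σ hσ)] at hcard'
  · rintro hp
    obtain ⟨σ, hσf, Y, hY, rfl⟩ := mem_Spart.mp hp
    obtain ⟨hσ, hr⟩ := mem_filter.mp hσf
    refine ⟨mem_Spart.mpr ⟨σ, hσ, Y, hY, rfl⟩, ?_⟩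
    show r + 1 ≤ (topOf N Kf σ Y).card
    rw [card_topOf (hlow σ hσ)]; exact hr

lemma Tpart_filter (hlow : ∀ σ ∈ B, ∀ v ∈ σ, v < N) (r : ℕ) :
    (Tpart N Kf B).filter (fun p => r + 1 ≤ p.2.card) =
      Tpart N Kf (B.filter (fun σ => r + 1 ≤ σ.card + Kf σ)) := by
  ext p
  simp only [mem_filter]
  constructor
  · rintro ⟨hp, hcard⟩
    obtain ⟨σ, hσ, hK, Y, hY, rfl⟩ := mem_Tpart.mp hp
    refine mem_Tpart.mpr ⟨σ, mem_filter.mpr ⟨hσ, ?_⟩, hK, Y, hY, rfl⟩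
    have hcard' : r + 1 ≤ (topOf N Kf σ Y).card := hcard
    rwa [card_topOf (hlow σ hσ)] at hcard'
  · rintro hp
    obtain ⟨σ, hσf, hK, Y, hY, rfl⟩ := mem_Tpart.mp hp
    obtain ⟨hσ, hr⟩ := mem_filter.mp hσf
    refine ⟨mem_Tpart.mpr ⟨σ, hσ, hK, Y, hY, rfl⟩, ?_⟩
    show r + 1 ≤ (topOf N Kf σ Y).card
    rw [card_topOf (hlow σ hσ)]; exact hr

lemma pfull_sdiff (hlow : ∀ σ ∈ B, ∀ v ∈ σ, v < N) :
    Pfull N Kf B \ B = Ppos N Kf B := by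
  ext e
  simp only [mem_sdiff]
  constructor
  · rintro ⟨he, hne⟩
    obtain ⟨σ, hσ, T, hT, Y, hY, rfl⟩ := mem_Pfull.mp he
    have hTne : T.Nonempty := by
      rcases T.eq_empty_or_nonempty with rfl | h
      · exfalso
        apply hne
        have hd : σ ∪ dec N ∅ Y = σ := by simp [dec]
        rwa [hd]
      · exact h
    exact mem_Ppos.mpr ⟨σ, hσ, T, ⟨hT, hTne⟩, Y, hY, rfl⟩
  · intro he
    obtain ⟨σ, hσ, T, ⟨hT, hTne⟩, Y, hY, rfl⟩ := mem_Ppos.mp he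
    refine ⟨ppos_subset_pfull he, ?_⟩
    intro hmem
    obtain ⟨t, ht⟩ := hTne
    have hv : (N + 2*t + (if t ∈ Y then 1 else 0)) ∈ σ ∪ dec N T Y :=
      mem_union_right _ (mem_dec.mpr ⟨t, ht, rfl⟩)
    exact absurd (hlow _ hmem _ hv) (by omega)



end PartExt

open Finset PartExt in
/-- Every (possibly nonpure) simplicial complex `Δ` admits a complex `Γ ⊇ Δ` with
`dim Γ = dim Δ` and `d_Δ(σ) = d_Γ(σ)` for all faces `σ ∈ Δ`, such that both `Γ` and the
relative complex `(Γ,Δ)` admit layer-compatible partitionings of their face posets. -/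
theorem exists_layer_compatible_partition_extender
    (Δ : Finset (Finset ℕ)) (hΔ : IsComplex Δ) :
    ∃ Γ : Finset (Finset ℕ), IsComplex Γ ∧ Δ ⊆ Γ ∧
      Γ.sup Finset.card = Δ.sup Finset.card ∧
      (∀ σ ∈ Δ, dcard Δ σ = dcard Γ σ) ∧
      (∃ S, LayerCompatible S Γ) ∧
      (∃ T, LayerCompatible T (Γ \ Δ)) := by
  classical
  set N : ℕ := (Δ.sup (fun σ => σ.sup id)) + 1 with hN
  set Kf : Finset ℕ → ℕ := fun σ => dcard Δ σ - σ.card with hKf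
  have hlow : ∀ σ ∈ Δ, ∀ v ∈ σ, v < N := by
    intro σ hσ v hv
    have h1 : v ≤ σ.sup id := Finset.le_sup (f := id) hv
    have h2 : σ.sup id ≤ Δ.sup (fun σ => σ.sup id) := Finset.le_sup hσ
    omega
  have hcard : ∀ σ ∈ Δ, σ.card ≤ dcard Δ σ := by
    intro σ hσ
    exact Finset.le_sup (f := Finset.card) (mem_filter.mpr ⟨hσ, subset_rfl⟩)
  have hdmono : ∀ σ τ : Finset ℕ, σ ⊆ τ → dcard Δ τ ≤ dcard Δ σ := by
    intro σ τ hst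
    apply Finset.sup_mono
    intro e he
    obtain ⟨h1, h2⟩ := mem_filter.mp he
    exact mem_filter.mpr ⟨h1, hst.trans h2⟩
  have hmx : ∀ σ ∈ Δ, ∀ τ ∈ Δ, σ ⊆ τ → τ.card + Kf τ ≤ σ.card + Kf σ := by
    intro σ hσ τ hτ hst
    have h1 := hcard σ hσ; have h2 := hcard τ hτ
    have h3 := hdmono σ τ hst
    simp only [hKf]; omega
  have hsub : Δ ⊆ Pfull N Kf Δ := by
    intro σ hσ
    exact mem_Pfull.mpr ⟨σ, hσ, ∅, empty_subset _, ∅, subset_rfl, by simp [dec]⟩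
  have hlowF : ∀ r : ℕ, ∀ σ ∈ Δ.filter (fun σ => r + 1 ≤ σ.card + Kf σ), ∀ v ∈ σ, v < N :=
    fun r σ hσ => hlow σ (mem_filter.mp hσ).1
  have hmxF : ∀ r : ℕ, ∀ σ ∈ Δ.filter (fun σ => r + 1 ≤ σ.card + Kf σ),
      ∀ τ ∈ Δ.filter (fun σ => r + 1 ≤ σ.card + Kf σ), σ ⊆ τ →
        τ.card + Kf τ ≤ σ.card + Kf σ :=
    fun r σ hσ τ hτ h => hmx σ (mem_filter.mp hσ).1 τ (mem_filter.mp hτ).1 h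
  refine ⟨Pfull N Kf Δ, ?_, hsub, ?_, ?_, ?_, ?_⟩
  · -- IsComplex
    intro γ hγ τ hτ
    obtain ⟨σ, hσ, T, hT, Y, hY, rfl⟩ := mem_Pfull.mp hγ
    have hτlow : τ.filter (fun v => v < N) ⊆ σ := by
      intro v hv
      obtain ⟨hvτ, hvN⟩ := mem_filter.mp hv
      rcases mem_union.mp (hτ hvτ) with h | h
      · exact h
      · exact absurd (dec_ge h) (by omega)
    have hτhigh : τ.filter (fun v => ¬ v < N) ⊆ dec N T Y := by
      intro v hv
      obtain ⟨hvτ, hvN⟩ := mem_filter.mp hv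
      rcases mem_union.mp (hτ hvτ) with h | h
      · exact absurd (hlow σ hσ v h) hvN
      · exact h
    obtain ⟨T'', hT'', hEq⟩ := subset_dec hτhigh
    have hτlowΔ : τ.filter (fun v => v < N) ∈ Δ := hΔ σ hσ _ hτlow
    have hKle : Kf σ ≤ Kf (τ.filter (fun v => v < N)) := by
      have h1 := hdmono _ σ hτlow
      have h2 := card_le_card hτlow
      have h3 := hcard σ hσ
      simp only [hKf]; omega
    refine mem_Pfull.mpr ⟨_, hτlowΔ, T'',
      hT''.trans (hT.trans (range_subset_range.mpr hKle)), Y ∩ T'', inter_subset_right, ?_⟩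
    have hde : dec N T'' (Y ∩ T'') = dec N T'' Y :=
      dec_congr fun i hi => by simp [mem_inter, hi]
    rw [hde, ← hEq]
    exact (filter_union_filter_not_eq _ τ).symm
  · -- sup card
    apply le_antisymm
    · apply Finset.sup_le
      intro γ hγ
      obtain ⟨σ, hσ, T, hT, Y, hY, rfl⟩ := mem_Pfull.mp hγ
      have h1 : (σ ∪ dec N T Y).card = σ.card + T.card := card_union_dec (hlow σ hσ)
      have h2 : T.card ≤ Kf σ := by
        have := card_le_card hT; rwa [card_range] at this
      have h3 : dcard Δ σ ≤ Δ.sup Finset.card := by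
        apply Finset.sup_le
        intro e he
        exact Finset.le_sup (f := Finset.card) (mem_filter.mp he).1
      have h4 := hcard σ hσ
      simp only [hKf] at h2
      omega
    · exact Finset.sup_mono hsub
  · -- dcard preservation
    intro σ hσ
    apply le_antisymm
    · apply Finset.sup_mono
      intro e he
      obtain ⟨h1, h2⟩ := mem_filter.mp he
      exact mem_filter.mpr ⟨hsub h1, h2⟩
    · apply Finset.sup_le
      intro γ hγ
      obtain ⟨hγP, hσγ⟩ := mem_filter.mp hγ
      obtain ⟨σ', hσ', T, hT, Y, hY, rfl⟩ := mem_Pfull.mp hγP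
      have hσσ' : σ ⊆ σ' := by
        intro v hv
        rcases mem_union.mp (hσγ hv) with h | h
        · exact h
        · exact absurd (dec_ge h) (by have := hlow σ hσ v hv; omega)
      have h1 : (σ' ∪ dec N T Y).card = σ'.card + T.card := card_union_dec (hlow σ' hσ')
      have h2 : T.card ≤ Kf σ' := by
        have := card_le_card hT; rwa [card_range] at this
      have h3 := hdmono σ σ' hσσ'
      have h4 := hcard σ' hσ'
      simp only [hKf] at h2
      omega
  · -- layer-compatible partitioning of Γ
    refine ⟨Spart N Kf Δ, isPartitioning_Spart hlow hmx, ?_⟩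
    intro r
    rw [Spart_filter hlow r, genGE_pfull hlow hmx r]
    exact isPartitioning_Spart (hlowF r) (hmxF r)
  · -- layer-compatible partitioning of Γ \ Δ
    refine ⟨Tpart N Kf Δ, ?_⟩
    rw [pfull_sdiff hlow]
    refine ⟨isPartitioning_Tpart hlow hmx, ?_⟩
    intro r
    rw [Tpart_filter hlow r, genGE_ppos hlow hmx r]
    exact isPartitioning_Tpart (hlowF r) (hmxF r)
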